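/- For every n ≥ 3 there exists a matching set for a cycle configuration C_n consisting of 2n−1 markers covering n pairwise non-overlapping groups: n corner markers v_1,…,v_n, the group {v_1, v_2}, and for each i with 2 ≤ i ≤ n the group {v_i, e_i, v_{i+1}} (indices mod n) with an extra edge marker e_i. That is, for every first-player move on a marker there is a second-player reply such that every group not containing the reply can be assigned a disjoint pair of two distinct remaining markers contained in it, all assigned pairs pairwise disjoint. -/

import Mathlib

/-- A valid covering `x → y L` for a configuration with marker set `N` and group set
`G`: the reply `y` is a marker different from the first move `x`; every group not
containing the reply is assigned (via the association list `L` of entries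
`(group, u, v)`) a pair of two distinct remaining markers contained in that group;
and all assigned pairs are pairwise disjoint and avoid the two played nodes. -/
def ValidCoveringList {X : Type*} (N : Set X) (G : Set (Set X)) (x y : X)
    (L : List (Set X × X × X)) : Prop :=
  x ∈ N ∧ y ∈ N ∧ y ≠ x ∧
  (∀ g ∈ G, y ∉ g → ∃ p ∈ L, p.1 = g) ∧
  (∀ p ∈ L, p.1 ∈ G ∧ y ∉ p.1 ∧ p.2.1 ∈ p.1 ∧ p.2.2 ∈ p.1 ∧ p.2.1 ≠ p.2.2 ∧
    p.2.1 ∈ N ∧ p.2.2 ∈ N ∧ p.2.1 ≠ x ∧ p.2.1 ≠ y ∧ p.2.2 ≠ x ∧ p.2.2 ≠ y) ∧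
  L.Pairwise (fun p q => Disjoint ({p.2.1, p.2.2} : Set X) ({q.2.1, q.2.2} : Set X))

lemma disj_pair {X : Type*} {a b c d : X} (h1 : a ≠ c) (h2 : a ≠ d) (h3 : b ≠ c)
    (h4 : b ≠ d) : Disjoint ({a, b} : Set X) {c, d} := by
  rw [Set.disjoint_iff_forall_ne]
  intro p hp q hq
  simp only [Set.mem_insert_iff, Set.mem_singleton_iff] at hp hq
  rcases hp with rfl | rfl <;> rcases hq with rfl | rfl <;> assumption

lemma buildVCL {X : Type*} {N : Set X} {G : Set (Set X)} {x y : X} (f : ℕ → Set X)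
    (P : ℕ → X × X) (a b : ℕ)
    (hx : x ∈ N) (hy : y ∈ N) (hyx : y ≠ x)
    (hcov : ∀ g ∈ G, y ∉ g → ∃ j, a ≤ j ∧ j < b ∧ f j = g)
    (hmem : ∀ j, a ≤ j → j < b → f j ∈ G ∧ y ∉ f j ∧ (P j).1 ∈ f j ∧ (P j).2 ∈ f j ∧
      (P j).1 ≠ (P j).2 ∧ (P j).1 ∈ N ∧ (P j).2 ∈ N ∧ (P j).1 ≠ x ∧ (P j).1 ≠ y ∧
      (P j).2 ≠ x ∧ (P j).2 ≠ y)
    (hdisj : ∀ j j', a ≤ j → j < j' → j' < b →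
      Disjoint ({(P j).1, (P j).2} : Set X) {(P j').1, (P j').2}) :
    ValidCoveringList N G x y ((List.range' a (b-a)).map (fun j => (f j, P j))) := by
  unfold ValidCoveringList
  refine ⟨hx, hy, hyx, ?_, ?_, ?_⟩
  · intro g hg hyg
    obtain ⟨j, h1, h2, h3⟩ := hcov g hg hyg
    exact ⟨(f j, P j), List.mem_map_of_mem (List.mem_range'_1.2 ⟨h1, by omega⟩), h3⟩
  · intro p hp
    obtain ⟨j, hj, rfl⟩ := List.mem_map.1 hp
    obtain ⟨h1, h2⟩ := List.mem_range'_1.1 hj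
    exact hmem j h1 (by omega)
  · rw [List.pairwise_map]
    refine (List.pairwise_lt_range' (s := a) (n := b-a)).imp_of_mem ?_
    intro j j' hj hj' hlt
    obtain ⟨h1, h2⟩ := List.mem_range'_1.1 hj
    obtain ⟨h3, h4⟩ := List.mem_range'_1.1 hj'
    exact hdisj j j' h1 hlt (by omega)

open Fin.NatCast

/-- **Cycle Configuration `C_n`.** For every `n ≥ 3` and every cycle configuration of
`2n − 1` distinct markers (corner markers `v i` and edge markers `e i` for `i ≠ 0`)
with the `n` pairwise non-overlapping groups `{v 0, v 1}` and `{v i, e i, v (i+1)}`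
for `i ≠ 0` (indices mod `n`), there is a matching set: for every first-player move
on a marker there is a second-player reply admitting a valid covering. -/
theorem cycle_configuration {X : Type*} (n : ℕ) [NeZero n] (hn : 3 ≤ n) (v e : Fin n → X)
    (hv : Function.Injective v)
    (he : ∀ i j : Fin n, i ≠ 0 → j ≠ 0 → e i = e j → i = j)
    (hve : ∀ i j : Fin n, j ≠ 0 → v i ≠ e j) :
    ∀ x ∈ (Set.range v ∪ e '' {i | i ≠ 0} : Set X),
      ∃ (y : X) (L : List (Set X × X × X)),
        ValidCoveringList (Set.range v ∪ e '' {i | i ≠ 0})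
          ({({v 0, v 1} : Set X)} ∪ (fun i => ({v i, e i, v (i + 1)} : Set X)) '' {i | i ≠ 0})
          x y L := by
  set Ns := (Set.range v ∪ e '' {i | i ≠ 0} : Set X) with hNs
  set Gs := ({({v 0, v 1} : Set X)} ∪ (fun i => ({v i, e i, v (i + 1)} : Set X)) '' {i | i ≠ 0}) with hGs
  set V : ℕ → X := fun j => v (j : Fin n) with hV
  set E : ℕ → X := fun j => e (j : Fin n) with hE
  have hvalc : ∀ j : ℕ, j < n → ((j : Fin n) : ℕ) = j := fun j hj => by
    rw [Fin.val_natCast]; exact Nat.mod_eq_of_lt hj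
  have hE0 : ∀ j : ℕ, 0 < j → j < n → (j : Fin n) ≠ 0 := by
    intro j h1 h2 h
    have := congrArg Fin.val h
    rw [hvalc j h2, Fin.val_zero] at this; omega
  have kV : ∀ j k : ℕ, j < n → k ≤ n → j ≠ k → (j ≠ 0 ∨ k ≠ n) → V j ≠ V k := by
    intro j k hj hk hjk h0 hEq
    have h1 := hv hEq
    have h2 := congrArg Fin.val h1
    rw [Fin.val_natCast, Fin.val_natCast] at h2
    rcases eq_or_lt_of_le hk with rfl | hk'
    · rw [Nat.mod_self, Nat.mod_eq_of_lt hj] at h2; omega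
    · rw [Nat.mod_eq_of_lt hj, Nat.mod_eq_of_lt hk'] at h2; omega
  have kV' : ∀ j k : ℕ, j ≤ n → k < n → j ≠ k → (k ≠ 0 ∨ j ≠ n) → V j ≠ V k :=
    fun j k hj hk hjk h0 => (kV k j hk hj (Ne.symm hjk) h0).symm
  have kE : ∀ j k : ℕ, 0 < j → j < n → 0 < k → k < n → j ≠ k → E j ≠ E k := by
    intro j k h1 h2 h3 h4 h5 hEq
    have h6 := congrArg Fin.val (he _ _ (hE0 j h1 h2) (hE0 k h3 h4) hEq)
    rw [hvalc j h2, hvalc k h4] at h6; omega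
  have kVE : ∀ j k : ℕ, 0 < k → k < n → V j ≠ E k := fun j k h1 h2 =>
    hve _ _ (hE0 k h1 h2)
  have hVN : ∀ j : ℕ, V j ∈ Ns := fun j => Or.inl ⟨_, rfl⟩
  have hEN : ∀ j : ℕ, 0 < j → j < n → E j ∈ Ns := fun j h1 h2 =>
    Or.inr ⟨_, hE0 j h1 h2, rfl⟩
  set fJ : ℕ → Set X := fun j => {V j, E j, V (j+1)} with hfJ
  have hfG : ∀ j : ℕ, 0 < j → j < n → fJ j ∈ Gs := by
    intro j h1 h2
    refine Or.inr ⟨(j : Fin n), hE0 j h1 h2, ?_⟩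
    simp only [hfJ, hV, hE]
    rw [← Nat.cast_add_one]
  have hfval : ∀ i' : Fin n, fJ i'.val = {v i', e i', v (i' + 1)} := by
    intro i'
    simp only [hfJ, hV, hE, Fin.cast_val_eq_self]
    congr 2
    rw [Nat.cast_add, Nat.cast_one, Fin.cast_val_eq_self]
  have hg0 : ({v 0, v 1} : Set X) = {V 0, V 1} := by
    simp only [hV, Nat.cast_zero, Nat.cast_one]
  have hival0 : ∀ i : Fin n, i ≠ 0 → i.val ≠ 0 := by
    intro i h h0
    exact h (by rw [← Fin.cast_val_eq_self i, h0, Nat.cast_zero])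
  have hival1 : ∀ i : Fin n, i ≠ 1 → i.val ≠ 1 := by
    intro i h h0
    exact h (by rw [← Fin.cast_val_eq_self i, h0, Nat.cast_one])
  have hxVal : ∀ i : Fin n, v i = V i.val := fun i => by
    simp only [hV, Fin.cast_val_eq_self]
  have hEVal : ∀ i : Fin n, e i = E i.val := fun i => by
    simp only [hE, Fin.cast_val_eq_self]
  have hsuccVal : ∀ i : Fin n, v (i + 1) = V (i.val + 1) := fun i => by
    simp only [hV]; congr 1
    rw [Nat.cast_add, Nat.cast_one, Fin.cast_val_eq_self]
  intro x hx
  have hzero : V 0 = v 0 := by simp only [hV, Nat.cast_zero]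
  have hone : V 1 = v 1 := by simp only [hV, Nat.cast_one]
  have hy1 : ∀ j : ℕ, 2 ≤ j → j < n → V 1 ∉ fJ j := by
    intro j h1 h2
    simp only [hfJ, Set.mem_insert_iff, Set.mem_singleton_iff]
    push_neg
    exact ⟨kV 1 j (by omega) (by omega) (by omega) (by omega),
      kVE 1 j (by omega) (by omega),
      kV 1 (j+1) (by omega) (by omega) (by omega) (by omega)⟩
  have hcovB : ∀ g ∈ Gs, V 1 ∉ g → ∃ j, 2 ≤ j ∧ j < n ∧ fJ j = g := by
    intro g hg hyg
    rw [hGs] at hg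
    rcases hg with hg | ⟨i', hi', rfl⟩
    · simp only [Set.mem_singleton_iff] at hg
      subst hg
      exact absurd (by rw [hg0]; exact Set.mem_insert_iff.2 (Or.inr rfl)) hyg
    · have h0 : i'.val ≠ 0 := hival0 i' hi'
      have h1 : i'.val ≠ 1 := by
        intro h
        exact hyg (Or.inl (by rw [hxVal i', h]))
      exact ⟨i'.val, by omega, i'.isLt, hfval i'⟩
  rcases hx with ⟨i, rfl⟩ | ⟨i, hi, rfl⟩
  · by_cases hi1 : i = 1
    · subst hi1
      rw [← hone]
      refine ⟨V 0, _, buildVCL fJ (fun j => (E j, V (j+1))) 1 (n-1) (hVN 1) (hVN 0)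
        (kV 0 1 (by omega) (by omega) (by omega) (by omega)) ?_ ?_ ?_⟩
      · -- coverage
        intro g hg hyg
        rw [hGs] at hg
        rcases hg with hg | ⟨i', hi', rfl⟩
        · simp only [Set.mem_singleton_iff] at hg
          subst hg
          exact absurd (by rw [hg0]; exact Set.mem_insert _ _) hyg
        · have hlt : i'.val < n - 1 := by
            rcases lt_or_ge i'.val (n-1) with h | h
            · exact h
            · exfalso
              have hv1 : i'.val = n - 1 := by omega
              apply hyg
              refine Or.inr (Or.inr ?_)
              simp only [Set.mem_singleton_iff]
              rw [hsuccVal i', hv1, show n - 1 + 1 = n from by omega]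
              simp only [hV, Fin.natCast_self, Nat.cast_zero]
          exact ⟨i'.val, by have := hival0 i' hi'; omega, hlt, hfval i'⟩
      · -- hmem
        intro j h1 h2
        refine ⟨hfG j (by omega) (by omega), ?_, by simp [hfJ], by simp [hfJ],
          (kVE (j+1) j (by omega) (by omega)).symm, hEN j (by omega) (by omega), hVN _,
          ?_, ?_, ?_, ?_⟩
        · -- V 0 ∉ fJ j
          simp only [hfJ, Set.mem_insert_iff, Set.mem_singleton_iff]
          push_neg
          exact ⟨kV 0 j (by omega) (by omega) (by omega) (by omega),
            kVE 0 j (by omega) (by omega),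
            kV 0 (j+1) (by omega) (by omega) (by omega) (by omega)⟩
        · exact (kVE 1 j (by omega) (by omega)).symm
        · exact (kVE 0 j (by omega) (by omega)).symm
        · exact kV' (j+1) 1 (by omega) (by omega) (by omega) (by omega)
        · exact kV' (j+1) 0 (by omega) (by omega) (by omega) (by omega)
      · -- hdisj
        intro j j' h1 hlt h2
        exact disj_pair (kE j j' (by omega) (by omega) (by omega) (by omega) (by omega))
          (kVE (j'+1) j (by omega) (by omega)).symm
          (kVE (j+1) j' (by omega) (by omega))
          (kV (j+1) (j'+1) (by omega) (by omega) (by omega) (by omega))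
    · -- x = v i, i ≠ 1 : reply V 1
      rw [hxVal i]
      have hiv1 : i.val ≠ 1 := hival1 i hi1
      set m : ℕ := if i = 0 then n else i.val with hm
      have hmfact : (i.val = 0 ∧ m = n) ∨ (i.val ≠ 0 ∧ m = i.val ∧ 2 ≤ m ∧ m < n) := by
        by_cases h : i = 0
        · left; exact ⟨by rw [h, Fin.val_zero], by rw [hm, if_pos h]⟩
        · right
          have h0 : i.val ≠ 0 := hival0 i h
          have hlt := i.isLt
          have hmi : m = i.val := by rw [hm, if_neg h]
          exact ⟨h0, hmi, by omega, by omega⟩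
      set PB : ℕ → X × X := fun j => if j < m then (V j, E j) else (E j, V (j+1)) with hPB
      refine ⟨V 1, _, buildVCL fJ PB 2 n (hVN i.val) (hVN 1)
        (kV 1 i.val (by omega) (by omega) (by omega) (by omega)) hcovB ?_ ?_⟩
      · intro j h1 h2
        by_cases hjm : j < m
        · have hPj : PB j = (V j, E j) := by rw [hPB]; simp only [if_pos hjm]
          rw [hPj]
          refine ⟨hfG j (by omega) (by omega), hy1 j h1 h2, by simp [hfJ], by simp [hfJ],
            kVE j j (by omega) (by omega), hVN j, hEN j (by omega) (by omega),
            kV j i.val (by omega) (by omega) (by omega) (by omega),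
            kV j 1 (by omega) (by omega) (by omega) (by omega),
            (kVE i.val j (by omega) (by omega)).symm,
            (kVE 1 j (by omega) (by omega)).symm⟩
        · have hPj : PB j = (E j, V (j+1)) := by rw [hPB]; simp only [if_neg hjm]
          rw [hPj]
          have him : i.val ≠ 0 ∧ m = i.val := by
            rcases hmfact with ⟨h3, h4⟩ | ⟨h3, h4, h5, h6⟩
            · omega
            · exact ⟨h3, h4⟩
          refine ⟨hfG j (by omega) (by omega), hy1 j h1 h2, by simp [hfJ], by simp [hfJ],
            (kVE (j+1) j (by omega) (by omega)).symm, hEN j (by omega) (by omega), hVN _,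
            (kVE i.val j (by omega) (by omega)).symm,
            (kVE 1 j (by omega) (by omega)).symm,
            kV' (j+1) i.val (by omega) (by omega) (by omega) (by omega),
            kV' (j+1) 1 (by omega) (by omega) (by omega) (by omega)⟩
      · intro j j' h1 hlt h2
        by_cases hjm : j < m <;> by_cases hjm' : j' < m
        · have hPj : PB j = (V j, E j) := by rw [hPB]; simp only [if_pos hjm]
          have hPj' : PB j' = (V j', E j') := by rw [hPB]; simp only [if_pos hjm']
          rw [hPj, hPj']
          exact disj_pair (kV j j' (by omega) (by omega) (by omega) (by omega))
            (kVE j j' (by omega) (by omega))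
            ((kVE j' j (by omega) (by omega)).symm)
            (kE j j' (by omega) (by omega) (by omega) (by omega) (by omega))
        · have hPj : PB j = (V j, E j) := by rw [hPB]; simp only [if_pos hjm]
          have hPj' : PB j' = (E j', V (j'+1)) := by rw [hPB]; simp only [if_neg hjm']
          rw [hPj, hPj']
          exact disj_pair (kVE j j' (by omega) (by omega))
            (kV j (j'+1) (by omega) (by omega) (by omega) (by omega))
            (kE j j' (by omega) (by omega) (by omega) (by omega) (by omega))
            ((kVE (j'+1) j (by omega) (by omega)).symm)
        · omega
        · have hPj : PB j = (E j, V (j+1)) := by rw [hPB]; simp only [if_neg hjm]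
          have hPj' : PB j' = (E j', V (j'+1)) := by rw [hPB]; simp only [if_neg hjm']
          rw [hPj, hPj']
          exact disj_pair (kE j j' (by omega) (by omega) (by omega) (by omega) (by omega))
            ((kVE (j'+1) j (by omega) (by omega)).symm)
            (kVE (j+1) j' (by omega) (by omega))
            (kV (j+1) (j'+1) (by omega) (by omega) (by omega) (by omega))
  · -- x = e i, i ≠ 0 : reply V 1
    rw [hEVal i]
    have h0 : i.val ≠ 0 := hival0 i hi
    have hilt := i.isLt
    set m : ℕ := i.val with hm
    set PC : ℕ → X × X := fun j =>
      if j < m then (V j, E j) else if j = m then (V j, V (j+1)) else (E j, V (j+1)) with hPC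
    refine ⟨V 1, _, buildVCL fJ PC 2 n (hEN i.val (by omega) (by omega)) (hVN 1)
      (kVE 1 i.val (by omega) (by omega)) hcovB ?_ ?_⟩
    · intro j h1 h2
      by_cases hjm : j < m
      · have hPj : PC j = (V j, E j) := by rw [hPC]; simp only [if_pos hjm]
        rw [hPj]
        refine ⟨hfG j (by omega) (by omega), hy1 j h1 h2, by simp [hfJ], by simp [hfJ],
          kVE j j (by omega) (by omega), hVN j, hEN j (by omega) (by omega),
          kVE j m (by omega) (by omega),
          kV j 1 (by omega) (by omega) (by omega) (by omega),
          kE j m (by omega) (by omega) (by omega) (by omega) (by omega),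
          (kVE 1 j (by omega) (by omega)).symm⟩
      · by_cases hjm2 : j = m
        · have hPj : PC j = (V j, V (j+1)) := by
            rw [hPC]; simp only [if_neg hjm, if_pos hjm2]
          rw [hPj]
          refine ⟨hfG j (by omega) (by omega), hy1 j h1 h2, by simp [hfJ], by simp [hfJ],
            kV j (j+1) (by omega) (by omega) (by omega) (by omega), hVN j, hVN _,
            kVE j m (by omega) (by omega),
            kV j 1 (by omega) (by omega) (by omega) (by omega),
            kVE (j+1) m (by omega) (by omega),
            kV' (j+1) 1 (by omega) (by omega) (by omega) (by omega)⟩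
        · have hPj : PC j = (E j, V (j+1)) := by
            rw [hPC]; simp only [if_neg hjm, if_neg hjm2]
          rw [hPj]
          refine ⟨hfG j (by omega) (by omega), hy1 j h1 h2, by simp [hfJ], by simp [hfJ],
            (kVE (j+1) j (by omega) (by omega)).symm, hEN j (by omega) (by omega), hVN _,
            kE j m (by omega) (by omega) (by omega) (by omega) (by omega),
            (kVE 1 j (by omega) (by omega)).symm,
            kVE (j+1) m (by omega) (by omega),
            kV' (j+1) 1 (by omega) (by omega) (by omega) (by omega)⟩
    · intro j j' h1 hlt h2
      by_cases hjm : j < m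
      · -- P j = A
        have hPj : PC j = (V j, E j) := by rw [hPC]; simp only [if_pos hjm]
        rw [hPj]
        by_cases hjm' : j' < m
        · have hPj' : PC j' = (V j', E j') := by rw [hPC]; simp only [if_pos hjm']
          rw [hPj']
          exact disj_pair (kV j j' (by omega) (by omega) (by omega) (by omega))
            (kVE j j' (by omega) (by omega))
            ((kVE j' j (by omega) (by omega)).symm)
            (kE j j' (by omega) (by omega) (by omega) (by omega) (by omega))
        · by_cases hjm2' : j' = m
          · have hPj' : PC j' = (V j', V (j'+1)) := by
              rw [hPC]; simp only [if_neg hjm', if_pos hjm2']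
            rw [hPj']
            exact disj_pair (kV j j' (by omega) (by omega) (by omega) (by omega))
              (kV j (j'+1) (by omega) (by omega) (by omega) (by omega))
              ((kVE j' j (by omega) (by omega)).symm)
              ((kVE (j'+1) j (by omega) (by omega)).symm)
          · have hPj' : PC j' = (E j', V (j'+1)) := by
              rw [hPC]; simp only [if_neg hjm', if_neg hjm2']
            rw [hPj']
            exact disj_pair (kVE j j' (by omega) (by omega))
              (kV j (j'+1) (by omega) (by omega) (by omega) (by omega))
              (kE j j' (by omega) (by omega) (by omega) (by omega) (by omega))
              ((kVE (j'+1) j (by omega) (by omega)).symm)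
      · by_cases hjm2 : j = m
        · -- P j = C, so j' > m, P j' = B
          have hPj : PC j = (V j, V (j+1)) := by
            rw [hPC]; simp only [if_neg hjm, if_pos hjm2]
          have hPj' : PC j' = (E j', V (j'+1)) := by
            rw [hPC]; simp only [if_neg (by omega : ¬ j' < m), if_neg (by omega : ¬ j' = m)]
          rw [hPj, hPj']
          exact disj_pair (kVE j j' (by omega) (by omega))
            (kV j (j'+1) (by omega) (by omega) (by omega) (by omega))
            (kVE (j+1) j' (by omega) (by omega))
            (kV (j+1) (j'+1) (by omega) (by omega) (by omega) (by omega))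
        · -- P j = B, so j' > m too
          have hPj : PC j = (E j, V (j+1)) := by
            rw [hPC]; simp only [if_neg hjm, if_neg hjm2]
          have hPj' : PC j' = (E j', V (j'+1)) := by
            rw [hPC]; simp only [if_neg (by omega : ¬ j' < m), if_neg (by omega : ¬ j' = m)]
          rw [hPj, hPj']
          exact disj_pair (kE j j' (by omega) (by omega) (by omega) (by omega) (by omega))
            ((kVE (j'+1) j (by omega) (by omega)).symm)
            (kVE (j+1) j' (by omega) (by omega))
            (kV (j+1) (j'+1) (by omega) (by omega) (by omega) (by omega))
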